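/- Let π be a k-colored permutation with insertion pair (P, Q) = (P(π), Q(π)). If the shadow line L_i of the square diagram of π passes through a single X^j, then the i-th column of P and the column of Q in the same position each consist of a single k-ribbon of height j. -/

import Mathlib

namespace KRF

/-- A letter of the alphabet `{1_1, …, 1_k, 2}`:  `one j` stands for the letter `1_j`
(with `1 ≤ j ≤ k` for genuine letters), and `two` stands for the letter `2`. -/
inductive Letter (k : ℕ) : Type where
  | one : ℕ → Letter k
  | two : Letter k
deriving DecidableEq

/-- A word over the alphabet `{1_1, …, 1_k, 2}`, listed from the leftmost letter to the
rightmost letter. -/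
abbrev Word (k : ℕ) := List (Letter k)

/-- The contribution of a letter to the rank: each `1_j` counts `1` and each `2` counts `2`. -/
def Letter.rank {k : ℕ} : Letter k → ℕ
  | .one _ => 1
  | .two => 2

/-- The rank of a word: the sum of its letters. -/
def Word.rank {k : ℕ} (w : Word k) : ℕ := (w.map Letter.rank).sum

/-- The letter `1_j` is valid when `1 ≤ j ≤ k`. -/
def Letter.Valid (k : ℕ) : Letter k → Prop
  | .one j => 1 ≤ j ∧ j ≤ k
  | .two => True

/-- A genuine word of the Fibonacci poset `Z(k)`: all of its letters are valid. -/
def Word.Valid (k : ℕ) (w : Word k) : Prop := ∀ l ∈ w, l.Valid k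

/-- The cover relation of the Fibonacci poset `Z(k)`:  `z` is covered by `w` iff `z` is
obtained from `w` either by changing a `2` into some `1_j` when all letters to the left of
that `2` are `2`'s, or by deleting the leftmost letter of the form `1_j`. -/
def ZCovers (k : ℕ) (z w : Word k) : Prop :=
  (∃ (p s : Word k) (j : ℕ), (∀ l ∈ p, l = Letter.two) ∧ 1 ≤ j ∧ j ≤ k ∧
      w = p ++ Letter.two :: s ∧ z = p ++ Letter.one j :: s) ∨
  (∃ (p s : Word k) (j : ℕ), (∀ l ∈ p, l = Letter.two) ∧ 1 ≤ j ∧ j ≤ k ∧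
      w = p ++ Letter.one j :: s ∧ z = p ++ s)

/-- `c 0 ⋖ c 1 ⋖ ⋯ ⋖ c n` is a saturated chain in `Z(k)` starting at the empty word. -/
def IsZChain (k n : ℕ) (c : ℕ → Word k) : Prop :=
  c 0 = [] ∧ ∀ i, i < n → ZCovers k (c i) (c (i + 1))

end KRF
namespace KRF

/-- A column of a (tiled and filled) `k`-ribbon Fibonacci tableau.
`single h v` is a column of height 1 (shape letter `1_h`) tiled by one `k`-ribbon of
height `h` filled with the value `v`.
`double ht hb vt vb` is a column of height 2 (shape letter `2`) tiled by a `k`-ribbon of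
height `ht` filled with `vt` stacked on top of a `k`-ribbon of height `hb` (always
`hb = k + 1 - ht` for genuine tableaux) filled with `vb`. -/
inductive Col (k : ℕ) : Type where
  | single : ℕ → ℕ → Col k
  | double : ℕ → ℕ → ℕ → ℕ → Col k
deriving DecidableEq

/-- A (tiled, filled) `k`-ribbon Fibonacci tableau: its list of columns, from the leftmost
column to the rightmost one. -/
abbrev Tab (k : ℕ) := List (Col k)

/-- The shape letter of a column. -/
def Col.shape {k : ℕ} : Col k → Letter k
  | .single h _ => Letter.one h
  | .double _ _ _ _ => Letter.two

/-- The `k`-ribbon Fibonacci shape (a word) underlying a tableau. -/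
def Tab.shape {k : ℕ} (T : Tab k) : Word k := T.map Col.shape

/-- The value in the bottom `k`-ribbon of a column. -/
def Col.bottomVal {k : ℕ} : Col k → ℕ
  | .single _ v => v
  | .double _ _ _ vb => vb

/-- The heights occurring in a column are genuine ribbon heights: between `1` and `k`,
and in a column of height 2 the two heights sum to `k + 1`. -/
def Col.HeightsValid (k : ℕ) : Col k → Prop
  | .single h _ => 1 ≤ h ∧ h ≤ k
  | .double ht hb _ _ => 1 ≤ ht ∧ ht ≤ k ∧ hb = k + 1 - ht

/-- The list of all entries of a tableau (one for each `k`-ribbon). -/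
def Tab.entries {k : ℕ} (T : Tab k) : List ℕ :=
  (T.map fun c => match c with
    | Col.single _ v => [v]
    | Col.double _ _ vt vb => [vt, vb]).flatten

/-- The list of the bottom-ribbon values of the columns of a tableau. -/
def Tab.bottoms {k : ℕ} (T : Tab k) : List ℕ := T.map Col.bottomVal

/-- `T` is a standard `k`-ribbon Fibonacci tableau with entries `1, …, n`:
heights are valid, the entries are exactly `1, …, n`,  and the tableau can be built by
placing `n, n-1, …, 1` in order, each new `k`-ribbon being either appended (as a new
rightmost height-1 column) to the shape formed by the `k`-ribbons containing larger
entries, or stacked on top of a single such `k`-ribbon.  Equivalently (and this is how we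
formalize it): the bottom entries strictly decrease from left to right (in particular the
`k`-ribbon containing the leftmost square of the bottom row contains `n`), and in each
column of height 2 the top entry is smaller than the bottom entry. -/
def IsStandardTab (k n : ℕ) (T : Tab k) : Prop :=
  (∀ c ∈ T, Col.HeightsValid k c) ∧
  (Tab.entries T).Perm (List.range' 1 n) ∧
  List.Chain' (fun a b => b < a) (Tab.bottoms T) ∧
  (∀ c ∈ T, ∀ ht hb vt vb, c = Col.double ht hb vt vb → vt < vb)

/-- Updating a (partial) path tableau along one cover step `z ⋖ w` of `Z(k)`, placing the
value `i` in the `k` new squares of `w` relative to `z`:  if `w` is obtained from `z` by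
inserting a letter `1_j` after the prefix of `2`'s, a new height-1 column with a single
ribbon of height `j` filled with `i` is created there; if `w` is obtained from `z` by
changing the letter `1_h` just after the prefix of `2`'s into a `2`, the `k` new squares
of that column form a `k`-ribbon of height `k + 1 - h` filled with `i`, stacked on top of
the already present `k`-ribbon of height `h`. -/
def updateTab (k : ℕ) (i : ℕ) : Word k → Word k → Tab k → Tab k
  | Letter.two :: z', Letter.two :: w', c :: T => c :: updateTab k i z' w' T
  | Letter.one h :: _, Letter.two :: _, Col.single _ v :: T =>
      Col.double (k + 1 - h) h i v :: T
  | z, Letter.one j :: w', T => if z = w' then Col.single j i :: T else T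
  | _, _, T => T

/-- The `k`-ribbon Fibonacci path tableau determined by a saturated chain in `Z(k)`:
for each `i = 1, …, n` the value `i` is placed in the `k` new squares of `c i` relative
to `c (i-1)`. -/
def chainTab (k : ℕ) (c : ℕ → Word k) : ℕ → Tab k
  | 0 => []
  | m + 1 => updateTab k (m + 1) (c m) (c (m + 1)) (chainTab k c m)

/-- `T` is a `k`-ribbon Fibonacci path tableau with entries `1, …, n`: it is obtained
from some saturated chain `∅ = c 0 ⋖ c 1 ⋖ ⋯ ⋖ c n` in `Z(k)` by placing `i`'s in the
`k` new squares created at the `i`-th step. -/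
def IsPathTab (k n : ℕ) (T : Tab k) : Prop :=
  ∃ c : ℕ → Word k, IsZChain k n c ∧ T = chainTab k c n

end KRF
namespace KRF

/-- A `k`-colored permutation of length `n`: a permutation `x_1 x_2 ⋯ x_n` of `{1, …, n}`
(here `x_i = perm i + 1`, using `Fin n` positions and values) together with a color
`color i ∈ {1, …, k}` attached to each entry. -/
structure ColoredPerm (n k : ℕ) : Type where
  perm : Equiv.Perm (Fin n)
  color : Fin n → ℕ
  color_pos : ∀ i, 1 ≤ color i
  color_le : ∀ i, color i ≤ k

/-- Insertion of a value `x` of color `j` into a `k`-ribbon Fibonacci tableau: compare `x`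
with the value `t` in the `k`-ribbon containing the leftmost square of the bottom row.
If the tableau is empty or `x > t`, a new leftmost height-1 column consisting of a single
`k`-ribbon of height `j` filled with `x` is created.  If `x < t`, a `k`-ribbon of height
`j` filled with `x` is placed on top of the `k`-ribbon containing `t` (which is forced to
become a `k`-ribbon of height `k + 1 - j`); if a `k`-ribbon of height `l` filled with `b`
was already on top of the ribbon containing `t`, it is bumped out and the value `b` with
color `l` is inserted recursively into the tableau formed by the columns to the right. -/
def insertVal (k : ℕ) (x j : ℕ) : Tab k → Tab k
  | [] => [Col.single j x]
  | c :: rest =>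
    if Col.bottomVal c < x then Col.single j x :: c :: rest
    else
      match c with
      | Col.single _ v => Col.double j (k + 1 - j) x v :: rest
      | Col.double ht _ vt vb => Col.double j (k + 1 - j) x vb :: insertVal k vt ht rest

/-- The insertion tableau obtained after inserting the first `i` colored entries
`x_1^{j_1}, …, x_i^{j_i}` of the `k`-colored permutation `π` into the empty tableau. -/
def PPartial (k n : ℕ) (π : ColoredPerm n k) (i : ℕ) : Tab k :=
  ((List.finRange n).take i).foldl
    (fun T m => insertVal k ((π.perm m : ℕ) + 1) (π.color m) T) []

/-- The insertion tableau `P(π)` of a `k`-colored permutation. -/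
def PTab (k n : ℕ) (π : ColoredPerm n k) : Tab k := PPartial k n π n

/-- The chain of shapes of the partial insertion tableaux of `π`. -/
def QChain (k n : ℕ) (π : ColoredPerm n k) (i : ℕ) : Word k :=
  Tab.shape (PPartial k n π i)

/-- The recording tableau `Q(π)`: it has the same shape as `P(π)`, and after the `i`-th
insertion the value `i` is placed in the `k` squares by which the shape grew at step `i`. -/
def QTab (k n : ℕ) (π : ColoredPerm n k) : Tab k := chainTab k (QChain k n π) n

end KRF
namespace KRF

/-- The recursive construction of the shadow lines of a square diagram, applied to the set
`S` of the positions of the `X`'s not lying on a previously drawn line.  Each line is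
recorded as the pair `(i₁, i₂)` where `i₁` is the position (column) of the highest
remaining `X` and `i₂` is the rightmost remaining column containing an `X`; the line
passes through these one or two `X`'s, which are then removed. -/
def shadowAux (n : ℕ) (p : Equiv.Perm (Fin n)) (S : Finset (Fin n)) :
    List (Fin n × Fin n) :=
  if h : S.Nonempty then
    (p.symm ((S.image p).max' (h.image p)), S.max' h) ::
      shadowAux n p ((S.erase (p.symm ((S.image p).max' (h.image p)))).erase (S.max' h))
  else []
termination_by S.card
decreasing_by
  have h1 : p.symm ((S.image p).max' (h.image p)) ∈ S := by
    obtain ⟨a, ha, hpa⟩ := Finset.mem_image.mp (Finset.max'_mem (S.image p) (h.image p))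
    simpa [← hpa] using ha
  calc ((S.erase (p.symm ((S.image p).max' (h.image p)))).erase (S.max' h)).card
      ≤ (S.erase (p.symm ((S.image p).max' (h.image p)))).card := Finset.card_erase_le
    _ < S.card := Finset.card_erase_lt_of_mem h1

/-- The list of shadow lines `L₁, L₂, …` of the square diagram of the `k`-colored
permutation `π`.  The `s`-th entry is the pair `(i₁, i₂)` of positions of the `X`'s
through which `L_s` passes: `i₁` is the column of the highest `X` on the line and `i₂` is
the rightmost column of an `X` on the line (the line passes through a single `X` exactly
when `i₁ = i₂`; when `i₁ ≠ i₂` the `X` in column `i₁` is the leftmost, higher one). -/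
def shadowLines {n k : ℕ} (π : ColoredPerm n k) : List (Fin n × Fin n) :=
  shadowAux n π.perm Finset.univ

end KRF
namespace KRF

section Aux

variable {k n : ℕ}

def foldIns (k : ℕ) (w : List (ℕ × ℕ)) (T : Tab k) : Tab k :=
  w.foldl (fun T y => insertVal k y.1 y.2 T) T

lemma foldIns_nil (T : Tab k) : foldIns k [] T = T := rfl

lemma foldIns_cons (y : ℕ × ℕ) (w : List (ℕ × ℕ)) (T : Tab k) :
    foldIns k (y :: w) T = foldIns k w (insertVal k y.1 y.2 T) := rfl

lemma foldIns_append (w₁ w₂ : List (ℕ × ℕ)) (T : Tab k) :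
    foldIns k (w₁ ++ w₂) T = foldIns k w₂ (foldIns k w₁ T) :=
  List.foldl_append ..

lemma entries_cons_single (h v : ℕ) (T : Tab k) :
    Tab.entries (Col.single h v :: T) = v :: Tab.entries T := rfl

lemma entries_cons_double (a b vt vb : ℕ) (T : Tab k) :
    Tab.entries (Col.double a b vt vb :: T) = vt :: vb :: Tab.entries T := rfl

lemma bottomVal_mem_entries (c : Col k) (T : Tab k) :
    Col.bottomVal c ∈ Tab.entries (c :: T) := by
  cases c <;> simp [entries_cons_single, entries_cons_double, Col.bottomVal]

lemma mem_entries_insertVal (x j : ℕ) (T : Tab k) :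
    ∀ a ∈ (insertVal k x j T).entries, a = x ∨ a ∈ T.entries := by
  induction T generalizing x j with
  | nil =>
    intro a ha
    simp only [insertVal, entries_cons_single] at ha
    simp [Tab.entries] at ha
    exact Or.inl ha
  | cons c rest ih =>
    intro a ha
    by_cases hlt : Col.bottomVal c < x
    · rw [show insertVal k x j (c :: rest) = Col.single j x :: c :: rest by
        simp [insertVal, hlt]] at ha
      rw [entries_cons_single, List.mem_cons] at ha
      rcases ha with rfl | ha
      · exact Or.inl rfl
      · exact Or.inr ha
    · cases c with
      | single hh v =>
        rw [show insertVal k x j (Col.single hh v :: rest)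
            = Col.double j (k + 1 - j) x v :: rest by simp [insertVal, hlt]] at ha
        rw [entries_cons_double, List.mem_cons, List.mem_cons] at ha
        rw [entries_cons_single]
        rcases ha with rfl | rfl | ha
        · exact Or.inl rfl
        · exact Or.inr (by simp)
        · exact Or.inr (by simp [ha])
      | double ht hb vt vb =>
        have hlt' : ¬ vb < x := by simpa [Col.bottomVal] using hlt
        rw [show insertVal k x j (Col.double ht hb vt vb :: rest)
            = Col.double j (k + 1 - j) x vb :: insertVal k vt ht rest by
              simp [insertVal, Col.bottomVal, hlt']] at ha
        rw [entries_cons_double, List.mem_cons, List.mem_cons] at ha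
        rw [entries_cons_double]
        rcases ha with rfl | rfl | ha

        · exact Or.inl rfl
        · exact Or.inr (by simp)
        · rcases ih vt ht a ha with rfl | ha'
          · exact Or.inr (by simp)
          · exact Or.inr (by simp [ha'])

lemma mem_entries_foldIns (w : List (ℕ × ℕ)) (T : Tab k) :
    ∀ a ∈ (foldIns k w T).entries, a ∈ w.map Prod.fst ∨ a ∈ T.entries := by
  induction w generalizing T with
  | nil => intro a ha; exact Or.inr ha
  | cons y w ih =>
    intro a ha
    rw [foldIns_cons] at ha
    rcases ih _ a ha with h | h
    · exact Or.inl (by simp at h ⊢; tauto)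
    · rcases mem_entries_insertVal y.1 y.2 T a h with rfl | h'
      · exact Or.inl (by simp)
      · exact Or.inr h'

lemma insertVal_max (x j : ℕ) (T : Tab k) (hmax : ∀ a ∈ T.entries, a < x) :
    insertVal k x j T = Col.single j x :: T := by
  cases T with
  | nil => rfl
  | cons c rest =>
    have : Col.bottomVal c < x := hmax _ (bottomVal_mem_entries c rest)
    simp [insertVal, this]

end Aux
section Aux2

variable {k n : ℕ}

lemma insertVal_double (x j ht hb vt vb : ℕ) (T : Tab k) (h : ¬ vb < x) :
    insertVal k x j (Col.double ht hb vt vb :: T)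
      = Col.double j (k + 1 - j) x vb :: insertVal k vt ht T := by
  simp [insertVal, Col.bottomVal, h]

lemma insertVal_single (x j h0 v : ℕ) (T : Tab k) (h : ¬ v < x) :
    insertVal k x j (Col.single h0 v :: T)
      = Col.double j (k + 1 - j) x v :: T := by
  simp [insertVal, Col.bottomVal, h]

lemma foldIns_on_double :
    ∀ (ys : List (ℕ × ℕ)) (yl : ℕ × ℕ), ys.getLast? = some yl →
      ∀ (T : Tab k) (ht hb vt vb : ℕ), (∀ y ∈ ys, y.1 < vb) →
      foldIns k ys (Col.double ht hb vt vb :: T) =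
        Col.double yl.2 (k + 1 - yl.2) yl.1 vb :: foldIns k ((vt, ht) :: ys.dropLast) T := by
  intro ys
  induction ys with
  | nil => intro yl h; simp at h
  | cons y ys' ih =>
    intro yl hlast T ht hb vt vb hlt
    have h1 : ¬ vb < y.1 := lt_asymm (hlt y List.mem_cons_self)
    have step : foldIns k (y :: ys') (Col.double ht hb vt vb :: T)
        = foldIns k ys' (Col.double y.2 (k + 1 - y.2) y.1 vb :: insertVal k vt ht T) := by
      rw [foldIns_cons, insertVal_double _ _ _ _ _ _ _ h1]
    cases ys' with
    | nil =>
      simp only [List.getLast?_singleton, Option.some.injEq] at hlast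
      subst hlast
      rw [step, foldIns_nil, List.dropLast_singleton, foldIns_cons, foldIns_nil]
    | cons z zs =>
      have hlast' : (z :: zs).getLast? = some yl := by
        rwa [List.getLast?_cons_cons] at hlast
      rw [step, ih yl hlast' (insertVal k vt ht T) y.2 (k + 1 - y.2) y.1 vb
        (fun a ha => hlt a (List.mem_cons_of_mem _ ha))]
      simp only [List.dropLast_cons₂, foldIns_cons]

lemma foldIns_on_single :
    ∀ (ys : List (ℕ × ℕ)) (yl : ℕ × ℕ), ys.getLast? = some yl →
      ∀ (T : Tab k) (j x : ℕ), (∀ y ∈ ys, y.1 < x) →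
      foldIns k ys (Col.single j x :: T) =
        Col.double yl.2 (k + 1 - yl.2) yl.1 x :: foldIns k ys.dropLast T := by
  intro ys
  cases ys with
  | nil => intro yl h; simp at h
  | cons y ys' =>
    intro yl hlast T j x hlt
    have h1 : ¬ x < y.1 := lt_asymm (hlt y List.mem_cons_self)
    have step : foldIns k (y :: ys') (Col.single j x :: T)
        = foldIns k ys' (Col.double y.2 (k + 1 - y.2) y.1 x :: T) := by
      rw [foldIns_cons, insertVal_single _ _ _ _ _ h1]
    cases ys' with
    | nil =>
      simp only [List.getLast?_singleton, Option.some.injEq] at hlast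
      subst hlast
      rw [step, foldIns_nil, List.dropLast_singleton, foldIns_nil]
    | cons z zs =>
      have hlast' : (z :: zs).getLast? = some yl := by
        rwa [List.getLast?_cons_cons] at hlast
      rw [step, foldIns_on_double (z :: zs) yl hlast' T y.2 (k + 1 - y.2) y.1 x
        (fun a ha => hlt a (List.mem_cons_of_mem _ ha))]
      rw [show ((y.1, y.2) : ℕ × ℕ) = y from rfl, List.dropLast_cons₂]

end Aux2
section Aux3

variable {k n : ℕ}

/-- The colored word attached to a list of positions. -/
def wordOf (p : Equiv.Perm (Fin n)) (col : Fin n → ℕ) (l : List (Fin n)) : List (ℕ × ℕ) :=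
  l.map (fun s => ((p s : ℕ) + 1, col s))

lemma head_extract_single (p : Equiv.Perm (Fin n)) (col : Fin n → ℕ)
    (u : List (Fin n)) (t : Fin n) (hu : ∀ s ∈ u, (p s : ℕ) < p t) :
    foldIns k (wordOf p col (u ++ [t])) [] =
      Col.single (col t) ((p t : ℕ) + 1) :: foldIns k (wordOf p col u) [] := by
  rw [show wordOf p col (u ++ [t]) = wordOf p col u ++ [((p t : ℕ) + 1, col t)] by
      simp [wordOf]]
  rw [foldIns_append, foldIns_cons, foldIns_nil]
  exact insertVal_max _ _ _ (by
    intro a ha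
    rcases mem_entries_foldIns _ _ a ha with h | h
    · simp only [wordOf, List.map_map, List.mem_map, Function.comp] at h
      obtain ⟨s, hs, rfl⟩ := h
      have := hu s hs
      simp only []
      omega
    · simp [Tab.entries] at h)

lemma head_extract_double (p : Equiv.Perm (Fin n)) (col : Fin n → ℕ)
    (u v : List (Fin n)) (t rl : Fin n) (hv : v.getLast? = some rl)
    (hu : ∀ s ∈ u, (p s : ℕ) < p t) (hvv : ∀ s ∈ v, (p s : ℕ) < p t) :
    foldIns k (wordOf p col (u ++ t :: v)) [] =
      Col.double (col rl) (k + 1 - col rl) ((p rl : ℕ) + 1) ((p t : ℕ) + 1) ::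
        foldIns k (wordOf p col (u ++ v.dropLast)) [] := by
  rw [show u ++ t :: v = (u ++ [t]) ++ v by simp]
  rw [show wordOf p col ((u ++ [t]) ++ v) = wordOf p col (u ++ [t]) ++ wordOf p col v by
      simp [wordOf]]
  rw [foldIns_append, head_extract_single p col u t hu]
  have hlast : (wordOf p col v).getLast? = some (((p rl : ℕ) + 1), col rl) := by
    simp [wordOf, List.getLast?_map, hv]
  rw [foldIns_on_single (wordOf p col v) _ hlast _ _ _ (by
    intro y hy
    simp only [wordOf, List.mem_map] at hy
    obtain ⟨s, hs, rfl⟩ := hy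
    have := hvv s hs
    simpa using this)]
  congr 1
  simp only [show (wordOf p col v).dropLast = wordOf p col v.dropLast by simp [wordOf],
    show wordOf p col (u ++ v.dropLast) = wordOf p col u ++ wordOf p col v.dropLast by
      simp [wordOf], foldIns_append]

/-- Sorted list of a finset with an element erased. -/
lemma sort_erase (S : Finset (Fin n)) (t : Fin n) :
    (S.erase t).sort (· ≤ ·) = (S.sort (· ≤ ·)).erase t := by
  refine List.Perm.eq_of_pairwise' (Finset.pairwise_sort _ _)
    ((Finset.pairwise_sort S _).sublist List.erase_sublist) ?_
  refine (Finset.sort_perm_toList _ _).trans (.trans ?_ ((Finset.sort_perm_toList S _).erase t).symm)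
  rw [← Multiset.coe_eq_coe]
  simp [← Multiset.coe_erase, ← Finset.sort_eq]

lemma sort_max' (S : Finset (Fin n)) (h : S.Nonempty) :
    S.sort (· ≤ ·) = ((S.erase (S.max' h)).sort (· ≤ ·)) ++ [S.max' h] := by
  set l := S.sort (· ≤ ·) with hl
  have hne : l ≠ [] :=
    List.ne_nil_of_length_pos (by rw [hl, Finset.length_sort]; exact h.card_pos)
  have hlast : l.getLast hne = S.max' h := by
    rw [Finset.max'_eq_sorted_last, List.getLast_eq_getElem]
  obtain ⟨d, hd⟩ : ∃ d, l = d ++ [S.max' h] :=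
    ⟨l.dropLast, by rw [← hlast]; exact (List.dropLast_append_getLast hne).symm⟩
  have hnd : (d ++ [S.max' h]).Nodup := hd ▸ Finset.sort_nodup _ _
  have hnotmem : S.max' h ∉ d := fun hm =>
    ((List.nodup_append'.mp hnd).2.2 hm) (List.mem_singleton_self _)
  have herase : l.erase (S.max' h) = d := by
    rw [hd, List.erase_append_right _ hnotmem, List.erase_cons_head, List.append_nil]
  rw [sort_erase, herase]
  exact hd

end Aux3
section Aux4

variable {n : ℕ}

lemma shadow_main (k : ℕ) (p : Equiv.Perm (Fin n)) (col : Fin n → ℕ) (S : Finset (Fin n)) :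
    ∀ (i : ℕ) (i₁ i₂ : Fin n), (shadowAux n p S)[i]? = some (i₁, i₂) → i₁ = i₂ →
      ∃ v, (foldIns k (wordOf p col (S.sort (· ≤ ·))) [])[i]? =
        some (Col.single (col i₁) v) := by
  induction S using Finset.strongInduction with
  | _ S ih =>
  intro i i₁ i₂ hline heq
  by_cases h : S.Nonempty
  case neg =>
    rw [shadowAux, dif_neg h] at hline
    simp at hline
  rw [shadowAux, dif_pos h] at hline
  set t := p.symm ((S.image p).max' (h.image p)) with htdef
  set r := S.max' h with hrdef
  have ht : t ∈ S := by
    obtain ⟨a, ha, hpa⟩ := Finset.mem_image.mp (Finset.max'_mem (S.image p) (h.image p))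
    simpa [htdef, ← hpa] using ha
  have hr : r ∈ S := S.max'_mem h
  have hmax : ∀ s ∈ S, s ≠ t → (p s : ℕ) < (p t : ℕ) := by
    intro s hs hst
    have hpt : p t = (S.image p).max' (h.image p) := by rw [htdef]; exact p.apply_symm_apply _
    have hle : p s ≤ p t := hpt ▸ Finset.le_max' _ _ (Finset.mem_image_of_mem p hs)
    have hne : p s ≠ p t := fun hh => hst (p.injective hh)
    exact Fin.lt_iff_val_lt_val.mp (lt_of_le_of_ne hle hne)
  -- the head/tail decomposition of the insertion tableau
  obtain ⟨C, hC, hts⟩ : ∃ C : Col k, (t = r → C = Col.single (col t) ((p t : ℕ) + 1)) ∧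
      foldIns k (wordOf p col (S.sort (· ≤ ·))) [] =
        C :: foldIns k (wordOf p col (((S.erase t).erase r).sort (· ≤ ·))) [] := by
    by_cases hc : t = r
    · refine ⟨Col.single (col t) ((p t : ℕ) + 1), fun _ => rfl, ?_⟩
      have h1 : S.sort (· ≤ ·) = ((S.erase r).sort (· ≤ ·)) ++ [r] := sort_max' S h
      rw [h1, ← hc, Finset.erase_idem]
      exact head_extract_single p col _ t (fun s hs => by
        rw [Finset.mem_sort] at hs
        exact hmax s (Finset.mem_of_mem_erase hs) (Finset.ne_of_mem_erase hs))
    · have h1 : S.sort (· ≤ ·) = ((S.erase r).sort (· ≤ ·)) ++ [r] := sort_max' S h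
      have htm : t ∈ (S.erase r).sort (· ≤ ·) := by
        rw [Finset.mem_sort, Finset.mem_erase]
        exact ⟨hc, ht⟩
      obtain ⟨u, v, huv⟩ := List.append_of_mem htm
      have hnd : (u ++ t :: v).Nodup := huv ▸ Finset.sort_nodup _ _
      have htu : t ∉ u := fun hh => (List.nodup_append'.mp hnd).2.2 hh List.mem_cons_self
      have htv : t ∉ v := by
        have := (List.nodup_append'.mp hnd).2.1
        intro hh
        exact (List.nodup_cons.mp this).1 hh
      have hmemuv : ∀ s, s ∈ u ∨ s ∈ v → s ∈ S ∧ s ≠ t := by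
        intro s hs
        have hsm : s ∈ (S.erase r).sort (· ≤ ·) := by
          rw [huv]
          rcases hs with hs | hs
          · exact List.mem_append_left _ hs
          · exact List.mem_append_right _ (List.mem_cons_of_mem _ hs)
        refine ⟨Finset.mem_of_mem_erase (Finset.mem_sort _ |>.mp hsm), ?_⟩
        rintro rfl
        rcases hs with hs | hs
        · exact htu hs
        · exact htv hs
      have h2 : S.sort (· ≤ ·) = u ++ t :: (v ++ [r]) := by
        rw [h1, huv]
        simp
      refine ⟨Col.double (col r) (k + 1 - col r) ((p r : ℕ) + 1) ((p t : ℕ) + 1),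
        fun hh => absurd hh hc, ?_⟩
      rw [h2, head_extract_double p col u (v ++ [r]) t r List.getLast?_concat
        (fun s hs => (hmemuv s (Or.inl hs)).2 |> hmax s (hmemuv s (Or.inl hs)).1)
        (fun s hs => by
          rcases List.mem_append.mp hs with hs | hs
          · exact hmax s (hmemuv s (Or.inr hs)).1 (hmemuv s (Or.inr hs)).2
          · rw [List.mem_singleton] at hs
            rw [hs]
            exact hmax r hr (Ne.symm hc))]
      congr 2
      rw [List.dropLast_concat]
      have : u ++ v = ((S.erase r).erase t).sort (· ≤ ·) := by
        rw [sort_erase, huv, List.erase_append_right _ htu, List.erase_cons_head]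
      rw [this, Finset.erase_right_comm]
  cases i with
  | zero =>
    simp only [List.getElem?_cons_zero, Option.some.injEq, Prod.mk.injEq] at hline
    obtain ⟨h1, h2⟩ := hline
    rw [hts, ← h1, hC (h1.trans (heq.trans h2.symm))]
    exact ⟨(p t : ℕ) + 1, by simp⟩
  | succ i' =>
    rw [List.getElem?_cons_succ] at hline
    have hsub : (S.erase t).erase r ⊂ S :=
      ssubset_of_subset_of_ssubset (Finset.erase_subset _ _) (Finset.erase_ssubset ht)
    obtain ⟨v, hv⟩ := ih _ hsub i' i₁ i₂ hline heq
    exact ⟨v, by rw [hts, List.getElem?_cons_succ]; exact hv⟩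

end Aux4
section Aux5

variable {k n : ℕ}

lemma shape_cons (c : Col k) (T : Tab k) :
    Tab.shape (c :: T) = Col.shape c :: Tab.shape T := rfl

lemma updateTab_shape (K i : ℕ) :
    ∀ (T : Tab K) (x j : ℕ) (R : Tab K), Tab.shape R = Tab.shape T →
      Tab.shape (updateTab K i (Tab.shape T) (Tab.shape (insertVal K x j T)) R)
        = Tab.shape (insertVal K x j T) := by
  intro T
  induction T with
  | nil =>
    intro x j R hR
    obtain rfl : R = [] := by
      cases R with
      | nil => rfl
      | cons c R' => simp [Tab.shape] at hR
    rw [show insertVal K x j [] = [Col.single j x] from rfl]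
    show Tab.shape (updateTab K i [] (Tab.shape [Col.single j x]) []) = _
    simp [Tab.shape, updateTab, Col.shape]
  | cons c rest ih =>
    intro x j R hR
    obtain ⟨c', R', rfl⟩ : ∃ c' R', R = c' :: R' := by
      cases R with
      | nil => simp [Tab.shape] at hR
      | cons c' R' => exact ⟨c', R', rfl⟩
    rw [shape_cons, shape_cons] at hR
    obtain ⟨hR1, hR2⟩ := List.cons_eq_cons.mp hR
    by_cases hlt : Col.bottomVal c < x
    · rw [show insertVal K x j (c :: rest) = Col.single j x :: c :: rest by
        simp [insertVal, hlt]]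
      rw [show Tab.shape (Col.single j x :: c :: rest)
          = Letter.one j :: Tab.shape (c :: rest) from rfl]
      rw [show updateTab K i (Tab.shape (c :: rest))
          (Letter.one j :: Tab.shape (c :: rest)) (c' :: R')
          = if Tab.shape (c :: rest) = Tab.shape (c :: rest)
            then Col.single j i :: c' :: R' else c' :: R' by simp [updateTab]]
      rw [if_pos rfl, shape_cons, shape_cons, shape_cons, hR1, hR2]
      rfl
    · cases c with
      | single h0 v =>
        have hlt' : ¬ v < x := by simpa [Col.bottomVal] using hlt
        rw [insertVal_single _ _ _ _ _ hlt']
        obtain ⟨v', rfl⟩ : ∃ v', c' = Col.single h0 v' := by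
          cases c' with
          | single a b =>
            simp [Col.shape] at hR1
            exact ⟨b, by rw [hR1]⟩
          | double a b ct cb => simp [Col.shape] at hR1
        rw [show Tab.shape (Col.single h0 v :: rest)
            = Letter.one h0 :: Tab.shape rest from rfl]
        rw [show Tab.shape (Col.double j (K + 1 - j) x v :: rest)
            = Letter.two :: Tab.shape rest from rfl]
        rw [show updateTab K i (Letter.one h0 :: Tab.shape rest)
            (Letter.two :: Tab.shape rest) (Col.single h0 v' :: R')
            = Col.double (K + 1 - h0) h0 i v' :: R' by simp [updateTab]]
        rw [shape_cons, hR2]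
        rfl
      | double ht hb vt vb =>
        have hlt' : ¬ vb < x := by simpa [Col.bottomVal] using hlt
        rw [insertVal_double _ _ _ _ _ _ _ hlt']
        obtain ⟨a, b, ct, cb, rfl⟩ : ∃ a b ct cb, c' = Col.double a b ct cb := by
          cases c' with
          | single a b => simp [Col.shape] at hR1
          | double a b ct cb => exact ⟨a, b, ct, cb, rfl⟩
        rw [show Tab.shape (Col.double ht hb vt vb :: rest)
            = Letter.two :: Tab.shape rest from rfl]
        rw [show Tab.shape (Col.double j (K + 1 - j) x vb :: insertVal K vt ht rest)
            = Letter.two :: Tab.shape (insertVal K vt ht rest) from rfl]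
        rw [show updateTab K i (Letter.two :: Tab.shape rest)
            (Letter.two :: Tab.shape (insertVal K vt ht rest))
            (Col.double a b ct cb :: R')
            = Col.double a b ct cb ::
              updateTab K i (Tab.shape rest) (Tab.shape (insertVal K vt ht rest)) R'
            by simp [updateTab]]
        rw [shape_cons, ih vt ht R' hR2]
        rfl

lemma PPartial_succ (K N : ℕ) (π : ColoredPerm N K) (m : ℕ) (hm : m < N) :
    ∃ x j, PPartial K N π (m + 1) = insertVal K x j (PPartial K N π m) := by
  have hlen : m < (List.finRange N).length := by simpa using hm
  refine ⟨(π.perm ((List.finRange N).get ⟨m, hlen⟩) : ℕ) + 1,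
    π.color ((List.finRange N).get ⟨m, hlen⟩), ?_⟩
  rw [PPartial, PPartial, List.take_succ, List.getElem?_eq_getElem hlen]
  simp [List.foldl_append]

lemma chainTab_shape (K N : ℕ) (π : ColoredPerm N K) :
    ∀ m, m ≤ N → Tab.shape (chainTab K (QChain K N π) m) = QChain K N π m := by
  intro m
  induction m with
  | zero => intro _; rfl
  | succ m ihm =>
    intro hm
    obtain ⟨x, j, hx⟩ := PPartial_succ K N π m (by omega)
    have h1 : QChain K N π (m + 1) = Tab.shape (insertVal K x j (PPartial K N π m)) := by
      rw [QChain, hx]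
    rw [chainTab, h1, show QChain K N π m = Tab.shape (PPartial K N π m) from rfl]
    exact updateTab_shape K (m + 1) (PPartial K N π m) x j _
      (by rw [ihm (by omega)]; rfl)

lemma PTab_eq (K N : ℕ) (π : ColoredPerm N K) :
    PTab K N π = foldIns K (wordOf π.perm π.color (Finset.univ.sort (· ≤ ·))) [] := by
  rw [PTab, PPartial, Fin.sort_univ, List.take_of_length_le (by simp)]
  rw [wordOf, foldIns, List.foldl_map]

lemma QTab_shape (K N : ℕ) (π : ColoredPerm N K) :
    Tab.shape (QTab K N π) = Tab.shape (PTab K N π) :=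
  chainTab_shape K N π N le_rfl

end Aux5
/-- Let `π` be a `k`-colored permutation with insertion pair
`(P, Q) = (P(π), Q(π))`.  If the shadow line `L_i` of the square diagram of `π` passes
through a single `X^j`, then the `i`-th column of `P` and the column of `Q` in the same
position each consist of a single `k`-ribbon of height `j`. -/
theorem shadow_single_column (k n : ℕ) (hk : 1 ≤ k) (π : ColoredPerm n k)
    (i : ℕ) (i₁ i₂ : Fin n) (hline : (shadowLines π)[i]? = some (i₁, i₂)) (heq : i₁ = i₂) :
    (∃ v, (PTab k n π)[i]? = some (Col.single (π.color i₁) v)) ∧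
    (∃ v, (QTab k n π)[i]? = some (Col.single (π.color i₁) v)) := by
  have hP : ∃ v, (PTab k n π)[i]? = some (Col.single (π.color i₁) v) := by
    obtain ⟨v, hv⟩ := shadow_main k π.perm π.color Finset.univ i i₁ i₂ hline heq
    exact ⟨v, by rw [PTab_eq]; exact hv⟩
  refine ⟨hP, ?_⟩
  obtain ⟨v, hv⟩ := hP
  have hsh : (Tab.shape (QTab k n π))[i]? = some (Letter.one (π.color i₁)) := by
    rw [QTab_shape]
    rw [show Tab.shape (PTab k n π) = (PTab k n π).map Col.shape from rfl]
    rw [List.getElem?_map, hv]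
    rfl
  rw [show Tab.shape (QTab k n π) = (QTab k n π).map Col.shape from rfl,
    List.getElem?_map] at hsh
  cases hq : (QTab k n π)[i]? with
  | none => rw [hq] at hsh; simp at hsh
  | some c =>
    rw [hq] at hsh
    cases c with
    | single h0 v' =>
      simp [Col.shape] at hsh
      exact ⟨v', by rw [hsh]⟩
    | double a b ct cb => simp [Col.shape] at hsh

end KRF
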